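/- Let K and L be compact spaces and Φ : C_p(K) → C_w(L) a homeomorphism taking the zero function to the zero function. With C(k,m,n) denoting the projection onto L of the set Z_{k,m,n} = { (E,y) ∈ [K]^{≤k} × L : Φ(O_K(E;1/m)) ⊆ ̅W_L(δ_y;1/n) }, one has L = ⋃_{k,m ∈ ℕ} C(k,m,n) for every fixed n ∈ ℕ. -/

import Mathlib

open Set TopologicalSpace

noncomputable section

/-- `C(K)` with the topology of pointwise convergence. -/
def Cp (K : Type*) [TopologicalSpace K] : Type _ := C(K, ℝ)

instance (K : Type*) [TopologicalSpace K] : TopologicalSpace (Cp K) :=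
  TopologicalSpace.induced (fun f : C(K, ℝ) => (f : K → ℝ)) inferInstance

instance (K : Type*) [TopologicalSpace K] : Zero (Cp K) := ⟨(0 : C(K, ℝ))⟩

/-- Evaluation of an element of `Cp K` at a point. -/
def Cp.toFun {K : Type*} [TopologicalSpace K] (f : Cp K) : K → ℝ :=
  ContinuousMap.toFun f

/-- `C(K)` (for `K` compact) with the weak topology of the Banach space `C(K)`:
the topology induced by all continuous linear functionals. -/
def Cw (K : Type*) [TopologicalSpace K] [CompactSpace K] : Type _ := C(K, ℝ)

instance (K : Type*) [TopologicalSpace K] [CompactSpace K] : TopologicalSpace (Cw K) :=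
  TopologicalSpace.induced
    (fun (f : C(K, ℝ)) (φ : C(K, ℝ) →L[ℝ] ℝ) => φ f) inferInstance

instance (K : Type*) [TopologicalSpace K] [CompactSpace K] : Zero (Cw K) := ⟨(0 : C(K, ℝ))⟩

/-- Evaluation of an element of `Cw K` at a point. -/
def Cw.toFun {K : Type*} [TopologicalSpace K] [CompactSpace K] (f : Cw K) : K → ℝ :=
  ContinuousMap.toFun f

/-- The basic pointwise neighborhood `O_K(E; ε) = {f : |f(x)| < ε for all x ∈ E}` of `0` in `Cp K`. -/
def OK (K : Type*) [TopologicalSpace K] (E : Set K) (ε : ℝ) : Set (Cp K) :=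
  {f | ∀ x ∈ E, |Cp.toFun f x| < ε}

/-- `W̄_L(δ_y; ε) = {f : |f(y)| ≤ ε}`, a closed weak neighborhood of `0` in `Cw L`. -/
def WbarL (L : Type*) [TopologicalSpace L] [CompactSpace L] (y : L) (ε : ℝ) : Set (Cw L) :=
  {f | |Cw.toFun f y| ≤ ε}

/-- `L = ⋃_{k,m} C(k,m,n)`: every `y ∈ L` belongs to some `C(k,m,n)`, i.e. admits a
nonempty finite set `E ⊆ K` of cardinality at most `k` with
`Φ(O_K(E; 1/m)) ⊆ W̄_L(δ_y; 1/n)`. -/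
theorem stmt4 (K L : Type*) [TopologicalSpace K] [CompactSpace K]
    [TopologicalSpace L] [CompactSpace L]
    (Φ : Cp K ≃ₜ Cw L) (hΦ : Φ 0 = 0) (n : ℕ) (hn : 0 < n) (y : L) :
    ∃ k m : ℕ, 0 < k ∧ 0 < m ∧ ∃ E : Set K, E.Nonempty ∧ E.Finite ∧ E.ncard ≤ k ∧
      Φ '' OK K E (1 / (m : ℝ)) ⊆ WbarL L y (1 / (n : ℝ)) := by
  
  -- `K` is nonempty, otherwise `Cp K` is a singleton but `Cw L` is not.
  have hKne : Nonempty K := by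
    by_contra h
    rw [not_nonempty_iff] at h
    haveI : Subsingleton (Cp K) := ⟨fun f g => ContinuousMap.ext fun x => h.elim x⟩
    have h10 : (ContinuousMap.const L 1 : Cw L) = (0 : Cw L) := by
      have hsub : Φ.symm (ContinuousMap.const L 1 : Cw L) = Φ.symm 0 :=
        Subsingleton.elim _ _
      calc (show Cw L from ContinuousMap.const L 1)
          = Φ (Φ.symm (ContinuousMap.const L 1 : Cw L)) := (Φ.apply_symm_apply _).symm
        _ = Φ (Φ.symm 0) := by rw [hsub]
        _ = 0 := Φ.apply_symm_apply 0
    have : (1 : ℝ) = 0 := congrFun (congrArg ContinuousMap.toFun h10) y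
    norm_num at this
  obtain ⟨x0⟩ := hKne
  -- evaluation at `y` is continuous on `Cw L`
  set φ0 : C(L, ℝ) →L[ℝ] ℝ := ContinuousMap.evalCLM ℝ y with hφ0
  have he : Continuous (fun g : Cw L => Cw.toFun g y) := by
    have h1 : Continuous (fun g : Cw L => (fun φ : C(L, ℝ) →L[ℝ] ℝ => φ g)) :=
      continuous_induced_dom
    have h2 : Continuous (fun g : Cw L => φ0 g) := (continuous_apply φ0).comp h1
    exact h2
  -- the open set `U` in `Cw L`
  set U : Set (Cw L) := {g | |Cw.toFun g y| < 1 / (n : ℝ)} with hU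
  have hUopen : IsOpen U := isOpen_lt (continuous_abs.comp he) continuous_const
  have hn' : (0 : ℝ) < 1 / n := by positivity
  have h0U : (0 : Cw L) ∈ U := by
    have : Cw.toFun (0 : Cw L) y = 0 := rfl
    simp [hU, this, hn', hn]
  -- pull back to a neighborhood of `0` in `Cp K`
  have hVnhds : Φ ⁻¹' U ∈ nhds (0 : Cp K) := by
    refine (hUopen.preimage Φ.continuous).mem_nhds ?_
    simpa [Set.mem_preimage, hΦ] using h0U
  rw [nhds_induced] at hVnhds
  obtain ⟨t, ht, hts⟩ := hVnhds
  have ht' : t ∈ nhds (0 : K → ℝ) := ht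
  rw [nhds_pi, Filter.mem_pi] at ht'
  obtain ⟨I, hIfin, s, hs, hIs⟩ := ht'
  -- choose radii
  have hchoice : ∀ x : K, ∃ ε : ℝ, 0 < ε ∧ Metric.ball (0 : ℝ) ε ⊆ s x := by
    intro x
    obtain ⟨ε, hε, hb⟩ := Metric.mem_nhds_iff.mp (hs x)
    exact ⟨ε, hε, hb⟩
  choose ε hεpos hball using hchoice
  classical
  set E : Set K := insert x0 I with hE
  have hEfin : E.Finite := hIfin.insert x0
  have hEne : E.Nonempty := ⟨x0, Set.mem_insert _ _⟩
  have hFne : hEfin.toFinset.Nonempty := by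
    rw [Set.Finite.toFinset_nonempty]; exact hEne
  set δ : ℝ := hEfin.toFinset.inf' hFne ε with hδ
  have hδpos : 0 < δ := by
    rw [hδ, Finset.lt_inf'_iff]
    intro x _; exact hεpos x
  obtain ⟨m0, hm0⟩ := exists_nat_one_div_lt hδpos
  refine ⟨E.ncard, m0 + 1, ?_, Nat.succ_pos m0, E, hEne, hEfin, le_rfl, ?_⟩
  · exact hEne.ncard_pos hEfin
  rintro g ⟨f, hf, rfl⟩
  -- show `Φ f ∈ WbarL`
  have hft : Cp.toFun f ∈ t := by
    apply hIs
    intro x hx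
    apply hball x
    have hxE : x ∈ E := Set.mem_insert_of_mem _ hx
    have hδε : δ ≤ ε x := Finset.inf'_le _ (hEfin.mem_toFinset.mpr hxE)
    have := hf x hxE
    rw [Metric.mem_ball, Real.dist_eq, sub_zero]
    calc |Cp.toFun f x| < 1 / ((m0 + 1 : ℕ) : ℝ) := this
      _ < δ := by exact_mod_cast hm0
      _ ≤ ε x := hδε
  have hfU : Φ f ∈ U := hts hft
  show |Cw.toFun (Φ f) y| ≤ 1 / (n : ℝ)
  exact le_of_lt hfU
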